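/- Lemma 3.1 (inverse-process convergence, in probability): let (Ω, ℱ, P) be a probability space, and for each N ≥ 1 let A^N : Ω × [0,∞) → [0,∞) be such that for each ω the path t ↦ A^N_t(ω) is nondecreasing and right-continuous with A^N_0(ω) = 0, and for each t the map ω ↦ A^N_t(ω) is measurable. Define B^N_t(ω) = inf{ s ≥ 0 : A^N_s(ω) > t } ∈ [0,∞] (with inf ∅ = ∞). Let a > 0 and let S ⊆ [0,∞) be dense. Suppose that for every t ∈ S, B^N_t → a·t in probability as N → ∞ (i.e. for every ε > 0, P{ |B^N_t − a t| > ε } → 0, where the event includes {B^N_t = ∞}). Then for every T > 0 and every ε > 0, P{ sup_{t∈[0,T]} |A^N_t − t/a| > ε } → 0 as N → ∞. -/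

import Mathlib

open Set Filter MeasureTheory Topology

set_option maxHeartbeats 1600000 in
/-- Lemma 3.1 of the paper (inverse-process convergence, in probability):
if the generalized inverses `B^N_t = inf{s ≥ 0 : A^N_s > t}` (valued in `ℝ≥0∞`,
with `inf ∅ = ∞`) converge in probability to `a·t` for each `t` in a dense subset
of `[0,∞)` (the exceptional event includes `{B^N_t = ∞}`), then
`sup_{t∈[0,T]} |A^N_t − t/a| → 0` in probability for every `T > 0`. -/
theorem inverse_process_convergence_in_probability
    {Ω : Type*} [MeasurableSpace Ω] (P : Measure Ω) [IsProbabilityMeasure P]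
    (A : ℕ → Ω → ℝ → ℝ)
    (hApos : ∀ N ω t, 0 ≤ t → 0 ≤ A N ω t)
    (hAmono : ∀ N ω, MonotoneOn (A N ω) (Set.Ici 0))
    (hArc : ∀ N ω t, 0 ≤ t → ContinuousWithinAt (A N ω) (Set.Ici t) t)
    (hA0 : ∀ N ω, A N ω 0 = 0)
    (hAmeas : ∀ N t, Measurable fun ω => A N ω t)
    (B : ℕ → Ω → ℝ → ENNReal)
    (hB : ∀ N ω t, B N ω t = ⨅ s ∈ {s : ℝ | 0 ≤ s ∧ t < A N ω s}, ENNReal.ofReal s)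
    (a : ℝ) (ha : 0 < a)
    (S : Set ℝ) (hS : S ⊆ Set.Ici 0)
    (hSdense : ∀ x ∈ Set.Ici (0:ℝ), x ∈ closure S)
    (hconv : ∀ t ∈ S, ∀ ε > (0:ℝ),
      Tendsto
        (fun N => P {ω | B N ω t = ⊤ ∨ ε < |(B N ω t).toReal - a * t|})
        atTop (nhds 0)) :
    ∀ T > (0:ℝ), ∀ ε > (0:ℝ),
      Tendsto (fun N => P {ω | ∃ t ∈ Set.Icc (0:ℝ) T, ε < |A N ω t - t / a|})
        atTop (nhds 0) := by
  classical
  intro T hT ε hε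
  set η : ℝ := a * ε / 8 with hη_def
  have hηpos : 0 < η := by positivity
  obtain ⟨m, hm⟩ := exists_nat_ge (4 * T / (a * ε))
  have hmT : T ≤ a * ((m : ℝ) * ε / 4) := by
    rw [div_le_iff₀ (by positivity)] at hm
    nlinarith
  -- choose a grid of points of S
  have hgrid : ∀ j : ℕ, ∃ v : ℝ, v ∈ S ∧
      v ∈ Set.Ioo ((j : ℝ) * ε / 4 + ε / 8) ((j : ℝ) * ε / 4 + ε / 4) := by
    intro j
    have hx0 : (0:ℝ) ≤ (j : ℝ) * ε / 4 + 3 * ε / 16 := by positivity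
    have hx : ((j : ℝ) * ε / 4 + 3 * ε / 16) ∈ closure S := hSdense _ hx0
    rw [mem_closure_iff] at hx
    obtain ⟨v, hvI, hvS⟩ := hx _ isOpen_Ioo
      (⟨by linarith, by linarith⟩ :
        ((j : ℝ) * ε / 4 + 3 * ε / 16) ∈
          Set.Ioo ((j : ℝ) * ε / 4 + ε / 8) ((j : ℝ) * ε / 4 + ε / 4))
    exact ⟨v, hvS, hvI⟩
  choose u huS huI using hgrid
  have hu1 : ∀ j : ℕ, (j : ℝ) * ε / 4 + ε / 8 < u j := fun j => (huI j).1
  have hu2 : ∀ j : ℕ, u j < (j : ℝ) * ε / 4 + ε / 4 := fun j => (huI j).2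
  have hupos : ∀ j : ℕ, 0 < u j := fun j => lt_of_le_of_lt (by positivity) (hu1 j)
  -- deterministic key lemma
  have key : ∀ N ω,
      (∀ j ≤ m, B N ω (u j) ≠ ⊤ ∧ |(B N ω (u j)).toReal - a * u j| ≤ η) →
      ∀ t ∈ Set.Icc (0:ℝ) T, |A N ω t - t / a| ≤ ε := by
    intro N ω hgood t ht
    obtain ⟨ht0, htT⟩ := ht
    -- fact 1 : if v < A t then B v ≤ ofReal t
    have fact1 : ∀ v : ℝ, v < A N ω t → B N ω v ≤ ENNReal.ofReal t := by
      intro v hv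
      rw [hB]
      exact iInf₂_le t ⟨ht0, hv⟩
    -- fact 2 : if B v < ofReal t (and 0 < t) then v < A t
    have fact2 : ∀ v : ℝ, 0 < t → B N ω v < ENNReal.ofReal t → v < A N ω t := by
      intro v htpos hlt
      rw [hB] at hlt
      simp only [iInf_lt_iff] at hlt
      obtain ⟨s, hsmem, hslt⟩ := hlt
      obtain ⟨hs0, hsA⟩ := hsmem
      have hst : s < t := (ENNReal.ofReal_lt_ofReal_iff htpos).mp hslt
      exact lt_of_lt_of_le hsA (hAmono N ω hs0 (le_trans hs0 hst.le) hst.le)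
    -- upper bound : A t ≤ t/a + ε
    have hexU : ∃ j, t + η < a * u j := by
      refine ⟨m, ?_⟩
      have := mul_lt_mul_of_pos_left (hu1 m) ha
      nlinarith
    set J := Nat.find hexU with hJ_def
    have hJ : t + η < a * u J := Nat.find_spec hexU
    have hJle : J ≤ m := Nat.find_le (by
      have := mul_lt_mul_of_pos_left (hu1 m) ha
      nlinarith)
    have hgJ := hgood J hJle
    have hBJ : t < (B N ω (u J)).toReal := by
      have := abs_le.mp hgJ.2
      linarith [this.1]
    have hAle : A N ω t ≤ u J := by
      by_contra hcon
      push_neg at hcon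
      have h1 : B N ω (u J) ≤ ENNReal.ofReal t := fact1 (u J) hcon
      have h2 : ENNReal.ofReal t < B N ω (u J) := by
        conv_rhs => rw [← ENNReal.ofReal_toReal hgJ.1]
        exact (ENNReal.ofReal_lt_ofReal_iff (lt_of_le_of_lt ht0 hBJ)).mpr hBJ
      exact absurd h1 (not_le.mpr h2)
    have hJub : u J ≤ t / a + ε := by
      have h1 : a * u J ≤ t + a * ε := by
        rcases Nat.eq_zero_or_pos J with hJ0 | hJ0
        · have hu0 : u J < ε / 4 := by rw [hJ0]; simpa using hu2 0
          nlinarith [mul_lt_mul_of_pos_left hu0 ha]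
        · have hmin : ¬ (t + η < a * u (J - 1)) := Nat.find_min hexU (by omega)
          push_neg at hmin
          have ha1 := hu1 (J - 1)
          have ha2 := hu2 J
          have hcast : ((J : ℝ)) = ((J - 1 : ℕ) : ℝ) + 1 := by
            have : J - 1 + 1 = J := by omega
            rw [← this]; push_cast; ring
          rw [hcast] at ha2
          have hb1 := mul_lt_mul_of_pos_left ha1 ha
          have hb2 := mul_lt_mul_of_pos_left ha2 ha
          nlinarith
      have : u J ≤ (t + a * ε) / a := by
        rw [le_div_iff₀ ha]
        linarith [mul_comm (u J) a]
      calc u J ≤ (t + a * ε) / a := this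
        _ = t / a + ε := by field_simp
    -- lower bound : t/a - ε ≤ A t
    have hexL : ∃ j, t ≤ a * u j + η := by
      refine ⟨m, ?_⟩
      have := mul_lt_mul_of_pos_left (hu1 m) ha
      nlinarith
    set K := Nat.find hexL with hK_def
    have hK : t ≤ a * u K + η := Nat.find_spec hexL
    have hKle : K ≤ m := Nat.find_le (by
      have := mul_lt_mul_of_pos_left (hu1 m) ha
      nlinarith)
    have hlow : t / a - ε ≤ A N ω t := by
      rcases Nat.eq_zero_or_pos K with hK0 | hK0
      · -- t is small, use A t ≥ 0
        have hu0 := hu2 0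
        simp at hu0
        rw [hK0] at hK
        have hu02 := hu2 K
        rw [hK0] at hu02
        simp at hu02
        have hta : t / a ≤ ε := by
          rw [div_le_iff₀ ha]
          nlinarith
        have := hApos N ω t ht0
        linarith
      · set k := K - 1 with hk_def
        have hkK : k < K := by omega
        have hmin : ¬ (t ≤ a * u k + η) := Nat.find_min hexL hkK
        push_neg at hmin
        have hkle : k ≤ m := by omega
        have hgk := hgood k hkle
        have htpos : 0 < t := lt_of_le_of_lt (by nlinarith [hupos k] : (0:ℝ) ≤ a * u k + η) hmin
        have hBk : (B N ω (u k)).toReal < t := by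
          have := abs_le.mp hgk.2
          linarith [this.2]
        have hBlt : B N ω (u k) < ENNReal.ofReal t := by
          conv_lhs => rw [← ENNReal.ofReal_toReal hgk.1]
          exact (ENNReal.ofReal_lt_ofReal_iff htpos).mpr hBk
        have hAgt : u k < A N ω t := fact2 (u k) htpos hBlt
        -- u k ≥ t/a - ε
        have ha1 := hu1 k
        have ha2 := hu2 K
        have hcast : ((K : ℝ)) = ((k : ℕ) : ℝ) + 1 := by
          have : k + 1 = K := by omega
          rw [← this]; push_cast; ring
        rw [hcast] at ha2
        have hb1 := mul_lt_mul_of_pos_left ha1 ha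
        have hb2 := mul_lt_mul_of_pos_left ha2 ha
        have h1 : t - a * ε ≤ a * u k := by nlinarith
        have h2 : t / a - ε ≤ u k := by
          rw [sub_le_iff_le_add, div_le_iff₀ ha]
          nlinarith [h1]
        linarith
    exact abs_le.mpr ⟨by linarith, by linarith⟩
  -- inclusion of events
  have hsub : ∀ N, {ω | ∃ t ∈ Set.Icc (0:ℝ) T, ε < |A N ω t - t / a|} ⊆
      ⋃ j ∈ Finset.range (m + 1),
        {ω | B N ω (u j) = ⊤ ∨ η < |(B N ω (u j)).toReal - a * u j|} := by
    intro N ω hω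
    by_contra hc
    simp only [Set.mem_iUnion, not_exists] at hc
    have hgood : ∀ j ≤ m, B N ω (u j) ≠ ⊤ ∧ |(B N ω (u j)).toReal - a * u j| ≤ η := by
      intro j hj
      have hjr : j ∈ Finset.range (m + 1) := Finset.mem_range.mpr (Nat.lt_succ_of_le hj)
      have := hc j hjr
      simp only [Set.mem_setOf_eq, not_or, not_lt] at this
      exact this
    obtain ⟨t, htmem, hlt⟩ := hω
    exact absurd hlt (not_lt.mpr (key N ω hgood t htmem))
  -- measure bound and limit
  have hbound : ∀ N, P {ω | ∃ t ∈ Set.Icc (0:ℝ) T, ε < |A N ω t - t / a|} ≤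
      ∑ j ∈ Finset.range (m + 1),
        P {ω | B N ω (u j) = ⊤ ∨ η < |(B N ω (u j)).toReal - a * u j|} := fun N =>
    (measure_mono (hsub N)).trans (measure_biUnion_finset_le _ _)
  have hsum : Tendsto (fun N => ∑ j ∈ Finset.range (m + 1),
      P {ω | B N ω (u j) = ⊤ ∨ η < |(B N ω (u j)).toReal - a * u j|}) atTop (nhds 0) := by
    have h := tendsto_finset_sum (Finset.range (m + 1))
      (fun j _ => hconv (u j) (huS j) η hηpos)
    simpa using h
  exact tendsto_of_tendsto_of_tendsto_of_le_of_le tendsto_const_nhds hsum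
    (fun N => zero_le) hbound
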